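/- For every positive integer N, ζ_{<N}(3) − ζ_{<N}(1,2) = Σ_{0<n_1≤n_2<N} 1/((N−n_1)·n_2^2), where ζ_{<N}(3) = Σ_{0<n<N} 1/n^3 and ζ_{<N}(1,2) = Σ_{0<n_1<n_2<N} 1/(n_1 n_2^2). -/

import Mathlib

open Finset

private lemma sum_Ioo_top' {n : ℕ} (hn : 0 < n) (f : ℕ → ℚ) :
    ∑ k ∈ Ioo 0 (n+1), f k = ∑ k ∈ Ioo 0 n, f k + f n := by
  have h : Ioo 0 (n+1) = insert n (Ioo 0 n) := by ext x; simp; omega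
  rw [h, sum_insert (by simp)]; ring

private lemma sum_Icc_top' {a n : ℕ} (h : a ≤ n) (hn : 1 ≤ n) (f : ℕ → ℚ) :
    ∑ k ∈ Icc a n, f k = ∑ k ∈ Icc a (n-1), f k + f n := by
  have h2 : Icc a n = insert n (Icc a (n-1)) := by ext x; simp; omega
  rw [h2, sum_insert (by simp; omega)]; ring

private lemma sum_Icc_bot' {a n : ℕ} (h : a ≤ n) (f : ℕ → ℚ) :
    ∑ k ∈ Icc a n, f k = f a + ∑ k ∈ Icc (a+1) n, f k := by
  have h2 : Icc a n = insert a (Icc (a+1) n) := by ext x; simp; omega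
  rw [h2, sum_insert (by simp)]

private lemma reflect_Ioo' (n : ℕ) (f : ℕ → ℚ) :
    ∑ m ∈ Ioo 0 n, f (n - m) = ∑ m ∈ Ioo 0 n, f m := by
  refine sum_nbij' (fun m => n - m) (fun m => n - m) ?_ ?_ ?_ ?_ ?_ <;>
    intro a ha <;> simp_all <;> omega

private def Tf (N : ℕ) : ℚ :=
  ∑ m ∈ Ioo 0 N, ∑ n2 ∈ Icc (N-m) (N-1), (1:ℚ)/((m:ℚ) * (n2:ℚ)^2)

private lemma keyf : ∀ N : ℕ,
    (∑ n ∈ Finset.Ioo 0 N, (1 : ℚ) / (n : ℚ) ^ 3) -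
      (∑ n2 ∈ Finset.Ioo 0 N, ∑ n1 ∈ Finset.Ioo 0 n2,
        (1 : ℚ) / ((n1 : ℚ) * (n2 : ℚ) ^ 2)) = Tf N := by
  intro N
  induction N with
  | zero => simp [Tf]
  | succ n ih =>
    rcases Nat.eq_zero_or_pos n with rfl | hn
    · have h1 : Ioo 0 1 = (∅ : Finset ℕ) := by ext x; simp; omega
      simp [Tf, h1]
    have hn0 : (n:ℚ) ≠ 0 := Nat.cast_ne_zero.mpr hn.ne'
    -- LHS splits
    rw [sum_Ioo_top' hn, sum_Ioo_top' hn (fun n2 => ∑ n1 ∈ Finset.Ioo 0 n2,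
        (1 : ℚ) / ((n1 : ℚ) * (n2 : ℚ) ^ 2))]
    -- T splits
    have hT1 : Tf (n+1) = ∑ m ∈ Ioo 0 n, (∑ n2 ∈ Icc (n+1-m) n, (1:ℚ)/((m:ℚ) * (n2:ℚ)^2))
        + ∑ n2 ∈ Icc 1 n, (1:ℚ)/((n:ℚ) * (n2:ℚ)^2) := by
      unfold Tf
      rw [show n+1-1 = n from rfl,
        sum_Ioo_top' hn (fun m => ∑ n2 ∈ Icc (n+1-m) n, (1:ℚ)/((m:ℚ) * (n2:ℚ)^2)),
        show n+1-n = 1 by omega]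
    have hT2 : ∀ m ∈ Ioo 0 n,
        (∑ n2 ∈ Icc (n+1-m) n, (1:ℚ)/((m:ℚ) * (n2:ℚ)^2))
        = (∑ n2 ∈ Icc (n-m) (n-1), (1:ℚ)/((m:ℚ) * (n2:ℚ)^2))
          + (1:ℚ)/((m:ℚ) * (n:ℚ)^2) - (1:ℚ)/((m:ℚ) * ((n-m:ℕ):ℚ)^2) := by
      intro m hm
      simp only [mem_Ioo] at hm
      have h1 : n + 1 - m = (n - m) + 1 := by omega
      have h2 := sum_Icc_bot' (show n - m ≤ n by omega)
        (fun n2 => (1:ℚ)/((m:ℚ) * (n2:ℚ)^2))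
      have h3 := sum_Icc_top' (show n - m ≤ n by omega) hn
        (fun n2 => (1:ℚ)/((m:ℚ) * (n2:ℚ)^2))
      rw [h1]
      rw [h3] at h2
      linarith [h2]
    rw [sum_congr rfl hT2] at hT1
    -- partial fractions
    have hPF : ∀ m ∈ Ioo 0 n,
        (1:ℚ)/((m:ℚ) * ((n-m:ℕ):ℚ)^2)
        = (1:ℚ)/((n:ℚ)^2 * (m:ℚ)) + (1:ℚ)/((n:ℚ)^2 * ((n-m:ℕ):ℚ))
          + (1:ℚ)/((n:ℚ) * ((n-m:ℕ):ℚ)^2) := by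
      intro m hm
      simp only [mem_Ioo] at hm
      have hc : ((n-m:ℕ):ℚ) = (n:ℚ) - (m:ℚ) := by
        push_cast [Nat.cast_sub hm.2.le]; ring
      have hm0 : (m:ℚ) ≠ 0 := Nat.cast_ne_zero.mpr hm.1.ne'
      have hnm : (n:ℚ) - (m:ℚ) ≠ 0 := by
        have : (m:ℚ) < (n:ℚ) := by exact_mod_cast hm.2
        linarith
      rw [hc]
      field_simp
      ring
    have hP : ∑ m ∈ Ioo 0 n, (1:ℚ)/((m:ℚ) * ((n-m:ℕ):ℚ)^2)
        = ∑ m ∈ Ioo 0 n, (1:ℚ)/((n:ℚ)^2 * (m:ℚ))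
          + ∑ m ∈ Ioo 0 n, (1:ℚ)/((n:ℚ)^2 * ((n-m:ℕ):ℚ))
          + ∑ m ∈ Ioo 0 n, (1:ℚ)/((n:ℚ) * ((n-m:ℕ):ℚ)^2) := by
      rw [sum_congr rfl hPF, sum_add_distrib, sum_add_distrib]
    have hR1 : ∑ m ∈ Ioo 0 n, (1:ℚ)/((n:ℚ)^2 * ((n-m:ℕ):ℚ))
        = ∑ m ∈ Ioo 0 n, (1:ℚ)/((n:ℚ)^2 * (m:ℚ)) :=
      reflect_Ioo' n (fun k => (1:ℚ)/((n:ℚ)^2 * (k:ℚ)))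
    have hR2 : ∑ m ∈ Ioo 0 n, (1:ℚ)/((n:ℚ) * ((n-m:ℕ):ℚ)^2)
        = ∑ m ∈ Ioo 0 n, (1:ℚ)/((n:ℚ) * (m:ℚ)^2) :=
      reflect_Ioo' n (fun k => (1:ℚ)/((n:ℚ) * (k:ℚ)^2))
    have hS : ∑ n2 ∈ Icc 1 n, (1:ℚ)/((n:ℚ) * (n2:ℚ)^2)
        = ∑ n2 ∈ Ioo 0 n, (1:ℚ)/((n:ℚ) * (n2:ℚ)^2) + (1:ℚ)/((n:ℚ) * (n:ℚ)^2) := by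
      have : Icc 1 n = Ioo 0 (n+1) := by ext x; simp; omega
      rw [this, sum_Ioo_top' hn]
    -- split the sum of differences in hT1
    have hSplit : ∑ m ∈ Ioo 0 n,
        ((∑ n2 ∈ Icc (n-m) (n-1), (1:ℚ)/((m:ℚ) * (n2:ℚ)^2))
          + (1:ℚ)/((m:ℚ) * (n:ℚ)^2) - (1:ℚ)/((m:ℚ) * ((n-m:ℕ):ℚ)^2))
        = Tf n + ∑ m ∈ Ioo 0 n, (1:ℚ)/((m:ℚ) * (n:ℚ)^2)
          - ∑ m ∈ Ioo 0 n, (1:ℚ)/((m:ℚ) * ((n-m:ℕ):ℚ)^2) := by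
      rw [sum_sub_distrib, sum_add_distrib]; rfl
    rw [hSplit] at hT1
    have e1 : ∀ m ∈ Ioo 0 n, (1:ℚ)/((m:ℚ) * (n:ℚ)^2) = (1:ℚ)/((n:ℚ)^2 * (m:ℚ)) := by
      intro m _; ring_nf
    rw [sum_congr rfl e1] at hT1
    have e2 : (1:ℚ)/((n:ℚ) * (n:ℚ)^2) = (1:ℚ)/(n:ℚ)^3 := by ring_nf
    have e3 : ∀ m ∈ Ioo 0 n, (1:ℚ)/((m:ℚ) * (n:ℚ)^2) = (1:ℚ)/((n:ℚ)^2 * (m:ℚ)) := e1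
    have e4 : ∑ n1 ∈ Ioo 0 n, (1:ℚ)/((n1:ℚ) * (n:ℚ)^2)
        = ∑ m ∈ Ioo 0 n, (1:ℚ)/((n:ℚ)^2 * (m:ℚ)) := sum_congr rfl e1
    have e5 : ∑ n2 ∈ Ioo 0 n, (1:ℚ)/((n:ℚ) * (n2:ℚ)^2)
        = ∑ m ∈ Ioo 0 n, (1:ℚ)/((n:ℚ) * (m:ℚ)^2) := rfl
    rw [hT1, hS, e2, e4]
    rw [e5] at hS ⊢
    linarith [hP, hR1, hR2, ih]

theorem stmt_7 (N : ℕ) (hN : 0 < N) :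
    (∑ n ∈ Finset.Ioo 0 N, (1 : ℚ) / (n : ℚ) ^ 3) -
      (∑ n2 ∈ Finset.Ioo 0 N, ∑ n1 ∈ Finset.Ioo 0 n2,
        (1 : ℚ) / ((n1 : ℚ) * (n2 : ℚ) ^ 2)) =
    ∑ n1 ∈ Finset.Ioo 0 N, ∑ n2 ∈ Finset.Icc n1 (N - 1),
      (1 : ℚ) / (((N : ℚ) - (n1 : ℚ)) * (n2 : ℚ) ^ 2) := by
  refine (keyf N).trans ?_
  unfold Tf
  refine sum_nbij' (fun m => N - m) (fun m => N - m) ?_ ?_ ?_ ?_ ?_ <;>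
    intro a ha <;> simp only [mem_Ioo] at ha ⊢
  · omega
  · omega
  · omega
  · omega
  · refine sum_congr rfl ?_
    intro n2 _
    have hc : ((N-a:ℕ):ℚ) = (N:ℚ) - (a:ℚ) := by
      push_cast [Nat.cast_sub ha.2.le]; ring
    rw [hc]
    ring_nf
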